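/- Let X be a random variable (continuous or discrete) and Y a random variable with finite outcome set 𝒴. Let p̃_{XY} be a joint distribution under which Y = f(X) for a single-valued function f, and let p_{XY} be a joint distribution with the same marginal over X, p(x) = p̃(x), satisfying |p_{XY} − p̃_{XY}|₁ ≤ ε ≤ 1/2. Set γ := −3ε·log ε + 5ε·log|𝒴|, and let F denote the IB curve of p_{XY}. Then for any r > 0 there exists α ∈ [0,1] such that the bottleneck variable T_α defined by the channel q_α(T_α = t | X = x) = α·δ(t, f(x)) + (1−α)·δ(t, 0) satisfies I_p(X;T_α) ≤ r and I_p(Y;T_α) ≥ F(r) − γ. -/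

import Mathlib

noncomputable section

/-- `p` is a joint probability distribution on the finite product `A × B`. -/
def IsJoint {A B : Type*} [Fintype A] [Fintype B] (p : A → B → ℝ) : Prop :=
  (∀ a b, 0 ≤ p a b) ∧ (∑ a, ∑ b, p a b) = 1

/-- `κ` is a channel (conditional distribution) from `A` to the finite type `B`. -/
def IsChannel {A B : Type*} [Fintype B] (κ : A → B → ℝ) : Prop :=
  ∀ a, (∀ b, 0 ≤ κ a b) ∧ (∑ b, κ a b) = 1

/-- Marginal distribution of the first coordinate. -/
def margFst {A B : Type*} [Fintype B] (p : A → B → ℝ) : A → ℝ := fun a => ∑ b, p a b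

/-- Marginal distribution of the second coordinate. -/
def margSnd {A B : Type*} [Fintype A] (p : A → B → ℝ) : B → ℝ := fun b => ∑ a, p a b

/-- ℓ1 distance between two joint distributions. -/
def l1 {A B : Type*} [Fintype A] [Fintype B] (p q : A → B → ℝ) : ℝ :=
  ∑ a, ∑ b, |p a b - q a b|

/-- Shannon entropy of a distribution on a finite type. -/
def ent {A : Type*} [Fintype A] (q : A → ℝ) : ℝ := -∑ a, q a * Real.log (q a)

/-- Conditional entropy `H(B | A)` of the second coordinate given the first. -/
def condEnt {A B : Type*} [Fintype A] [Fintype B] (p : A → B → ℝ) : ℝ :=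
  -∑ a, ∑ b, p a b * Real.log (p a b / margFst p a)

/-- Mutual information `I(A;B)` of a joint distribution, as `H(B) - H(B|A)`. -/
def mi {A B : Type*} [Fintype A] [Fintype B] (p : A → B → ℝ) : ℝ :=
  ent (margSnd p) - condEnt p

/-- Joint distribution of `(X,T)` when `T` is generated from `X` via channel `κ`
(so that the Markov condition `Y - X - T` holds). -/
def jointXT {X Y T : Type*} [Fintype Y] (p : X → Y → ℝ) (κ : X → T → ℝ) : X → T → ℝ :=
  fun x t => (∑ y, p x y) * κ x t

/-- Joint distribution of `(T,Y)` when `T` is generated from `X` via channel `κ`. -/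
def jointTY {X Y T : Type*} [Fintype X] (p : X → Y → ℝ) (κ : X → T → ℝ) : T → Y → ℝ :=
  fun t y => ∑ x, p x y * κ x t

/-- Joint distribution of `(Y,T)` when `T` is generated from `X` via channel `κ`. -/
def jointYT {X Y T : Type*} [Fintype X] (p : X → Y → ℝ) (κ : X → T → ℝ) : Y → T → ℝ :=
  fun y t => ∑ x, p x y * κ x t

/-- The information-bottleneck curve `F(r)`: the supremum of `I(Y;T)` over all (discrete)
bottleneck variables `T` obeying the Markov condition `Y - X - T` with `I(X;T) ≤ r`. -/
def IBcurve {X Y : Type*} [Fintype X] [Fintype Y] (p : X → Y → ℝ) (r : ℝ) : ℝ :=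
  sSup { v : ℝ | ∃ (n : ℕ) (κ : X → Fin n → ℝ), IsChannel κ ∧
    mi (jointXT p κ) ≤ r ∧ v = mi (jointTY p κ) }

/-- `Y` is the deterministic function `f` of `X` under the joint distribution `p`:
given `X = x`, all conditional mass is on `f x`. -/
def Determ {X Y : Type*} (p : X → Y → ℝ) (f : X → Y) : Prop :=
  ∀ x y, y ≠ f x → p x y = 0

/-- `γ := -3ε log ε + 5ε log |𝒴|`. -/
def gam (ε : ℝ) (c : ℕ) : ℝ := -(3*ε) * Real.log ε + 5*ε * Real.log (c : ℝ)

/-- The channel defining the bottleneck variable `T_α = B_α ⬝ f(X)`: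
`T_α` equals `f(x)` with probability `α` and equals the extra symbol `0`
(modelled as `none`, a symbol outside `𝒴`) with probability `1 - α`. -/
def kappaAlpha {X Y : Type*} [DecidableEq Y] (f : X → Y) (α : ℝ) : X → Option Y → ℝ :=
  fun x t => α * (if t = some (f x) then 1 else 0) +
    (1 - α) * (if t = (none : Option Y) then 1 else 0)

open Real Finset

lemma jensen_eta {ι : Type*} (s : Finset ι) (w x : ι → ℝ)
    (hw : ∀ i ∈ s, 0 ≤ w i) (hx : ∀ i ∈ s, 0 ≤ x i) :
    ∑ i ∈ s, w i * Real.negMulLog (x i)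
      ≤ Real.negMulLog (∑ i ∈ s, w i * x i)
        + (∑ i ∈ s, w i * x i) * Real.log (∑ i ∈ s, w i) := by
  rcases eq_or_lt_of_le (Finset.sum_nonneg hw) with h0 | hWpos
  · have hz : ∀ i ∈ s, w i = 0 := (Finset.sum_eq_zero_iff_of_nonneg hw).1 h0.symm
    have h1 : ∑ i ∈ s, w i * Real.negMulLog (x i) = 0 :=
      Finset.sum_eq_zero (fun i hi => by rw [hz i hi]; ring)
    have h2 : ∑ i ∈ s, w i * x i = 0 :=
      Finset.sum_eq_zero (fun i hi => by rw [hz i hi]; ring)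
    simp [h1, h2]
  · set W := ∑ i ∈ s, w i with hW
    set S := ∑ i ∈ s, w i * x i with hS
    have hWne : W ≠ 0 := ne_of_gt hWpos
    have key : ∑ i ∈ s, (w i / W) • Real.negMulLog (x i)
        ≤ Real.negMulLog (∑ i ∈ s, (w i / W) • x i) := by
      apply Real.concaveOn_negMulLog.le_map_sum
      · intro i hi; exact div_nonneg (hw i hi) hWpos.le
      · rw [← Finset.sum_div]; field_simp; exact hW.symm
      · intro i hi; exact hx i hi
    simp only [smul_eq_mul] at key
    have hsx : ∑ i ∈ s, (w i / W) * x i = S / W := by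
      rw [Finset.sum_div]
      exact Finset.sum_congr rfl (fun i _ => by ring)
    rw [hsx] at key
    have hLHS : ∑ i ∈ s, w i * Real.negMulLog (x i)
        = W * ∑ i ∈ s, (w i / W) * Real.negMulLog (x i) := by
      rw [Finset.mul_sum]
      exact Finset.sum_congr rfl (fun i _ => by field_simp)
    have hid : W * Real.negMulLog (S / W) = Real.negMulLog S + S * Real.log W := by
      have hmul : W * (S / W) = S := mul_div_cancel₀ S hWne
      have h3 := Real.negMulLog_mul W (S / W)
      rw [hmul] at h3
      have h4 : S / W * Real.negMulLog W = -(S * Real.log W) := by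
        rw [Real.negMulLog]
        field_simp
      linarith
    calc ∑ i ∈ s, w i * Real.negMulLog (x i)
        = W * ∑ i ∈ s, (w i / W) * Real.negMulLog (x i) := hLHS
      _ ≤ W * Real.negMulLog (S / W) := by
          exact mul_le_mul_of_nonneg_left key hWpos.le
      _ = Real.negMulLog S + S * Real.log W := hid

lemma eta_sub_le₁ {a b : ℝ} (ha : 0 ≤ a) (hab : a ≤ b) :
    Real.negMulLog b - Real.negMulLog a ≤ Real.negMulLog (b - a) := by
  have h1 : -a * Real.log b ≤ -a * Real.log a := by
    rcases eq_or_lt_of_le ha with h0 | hapos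
    · rw [← h0]; simp
    · have := Real.log_le_log hapos hab
      nlinarith
  have h2 : -(b - a) * Real.log b ≤ -(b - a) * Real.log (b - a) := by
    rcases eq_or_lt_of_le (sub_nonneg.2 hab) with h0 | hdpos
    · rw [← h0]; simp
    · have := Real.log_le_log hdpos (by linarith : b - a ≤ b)
      nlinarith
  simp only [Real.negMulLog]
  nlinarith [h1, h2]

lemma eta_sub_le₂ {a b : ℝ} (ha : 0 ≤ a) (hab : a ≤ b) (hb1 : b ≤ 1) :
    Real.negMulLog a - Real.negMulLog b ≤ b - a := by
  rcases eq_or_lt_of_le ha with h0 | hapos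
  · have := Real.negMulLog_nonneg (le_trans ha hab) hb1
    rw [← h0]
    simp only [Real.negMulLog_zero]
    linarith
  · have hbpos : 0 < b := lt_of_lt_of_le hapos hab
    have hlog : Real.log b - Real.log a ≤ b / a - 1 := by
      have := Real.log_le_sub_one_of_pos (show (0:ℝ) < b / a by positivity)
      rwa [Real.log_div (ne_of_gt hbpos) (ne_of_gt hapos)] at this
    have h1 : a * (Real.log b - Real.log a) ≤ b - a := by
      have h := mul_le_mul_of_nonneg_left hlog hapos.le
      have : a * (b / a - 1) = b - a := by field_simp
      linarith
    have h2 : (b - a) * Real.log b ≤ 0 :=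
      mul_nonpos_iff.2 (Or.inl ⟨by linarith, Real.log_nonpos hbpos.le hb1⟩)
    simp only [Real.negMulLog]
    nlinarith [h1, h2]

lemma eta_diff_le {a b : ℝ} (ha : 0 ≤ a) (ha1 : a ≤ 1) (hb : 0 ≤ b) (hb1 : b ≤ 1) :
    |Real.negMulLog a - Real.negMulLog b| ≤ Real.negMulLog |a - b| + |a - b| := by
  rcases le_total a b with hab | hab
  · rw [abs_sub_comm a b, abs_of_nonneg (by linarith : (0:ℝ) ≤ b - a)]
    have e1 := eta_sub_le₁ ha hab
    have e2 := eta_sub_le₂ ha hab hb1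
    have h0 : 0 ≤ Real.negMulLog (b - a) := Real.negMulLog_nonneg (by linarith) (by linarith)
    rw [abs_le]
    exact ⟨by linarith, by linarith⟩
  · rw [abs_of_nonneg (by linarith : (0:ℝ) ≤ a - b)]
    have e1 := eta_sub_le₁ hb hab
    have e2 := eta_sub_le₂ hb hab ha1
    have h0 : 0 ≤ Real.negMulLog (a - b) := Real.negMulLog_nonneg (by linarith) (by linarith)
    rw [abs_le]
    exact ⟨by linarith, by linarith⟩

lemma ent_eq {A : Type*} [Fintype A] (q : A → ℝ) : ent q = ∑ a, Real.negMulLog (q a) := by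
  simp [ent, Real.negMulLog]

lemma le_margFst {A B : Type*} [Fintype A] [Fintype B] (q : A → B → ℝ)
    (hq : ∀ a b, 0 ≤ q a b) (a : A) (b : B) : q a b ≤ margFst q a :=
  Finset.single_le_sum (fun b' _ => hq a b') (Finset.mem_univ b)

lemma margFst_nonneg {A B : Type*} [Fintype A] [Fintype B] (q : A → B → ℝ)
    (hq : ∀ a b, 0 ≤ q a b) (a : A) : 0 ≤ margFst q a :=
  Finset.sum_nonneg (fun b _ => hq a b)

lemma condEnt_nonneg {A B : Type*} [Fintype A] [Fintype B] (q : A → B → ℝ)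
    (hq : ∀ a b, 0 ≤ q a b) : 0 ≤ condEnt q := by
  rw [condEnt, neg_nonneg]
  apply Finset.sum_nonpos
  intro a _
  apply Finset.sum_nonpos
  intro b _
  rcases eq_or_lt_of_le (hq a b) with h0 | hpos
  · rw [← h0]; simp
  · have hm : 0 < margFst q a := lt_of_lt_of_le hpos (le_margFst q hq a b)
    have h1 : q a b / margFst q a ≤ 1 := (div_le_one hm).2 (le_margFst q hq a b)
    exact mul_nonpos_iff.2 (Or.inl ⟨hpos.le, Real.log_nonpos (by positivity) h1⟩)

lemma condEnt_eq {A B : Type*} [Fintype A] [Fintype B] (q : A → B → ℝ)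
    (hq : ∀ a b, 0 ≤ q a b) :
    condEnt q = -(∑ a, ∑ b, q a b * Real.log (q a b))
      + ∑ a, margFst q a * Real.log (margFst q a) := by
  rw [condEnt]
  have key : ∀ a, ∑ b, q a b * Real.log (q a b / margFst q a)
      = (∑ b, q a b * Real.log (q a b)) - margFst q a * Real.log (margFst q a) := by
    intro a
    have hpt : ∀ b, q a b * Real.log (q a b / margFst q a)
        = q a b * Real.log (q a b) - q a b * Real.log (margFst q a) := by
      intro b
      rcases eq_or_lt_of_le (hq a b) with h0 | hpos
      · rw [← h0]; simp
      · have hm : 0 < margFst q a := lt_of_lt_of_le hpos (le_margFst q hq a b)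
        rw [Real.log_div (ne_of_gt hpos) (ne_of_gt hm)]; ring
    rw [Finset.sum_congr rfl (fun b _ => hpt b), Finset.sum_sub_distrib, ← Finset.sum_mul]
    rfl
  rw [Finset.sum_congr rfl (fun a _ => key a), Finset.sum_sub_distrib]
  ring

lemma mi_swap {A B : Type*} [Fintype A] [Fintype B] (q : A → B → ℝ)
    (hq : ∀ a b, 0 ≤ q a b) :
    ent (margSnd q) - condEnt q = ent (margFst q) - condEnt (fun b a => q a b) := by
  rw [condEnt_eq q hq, condEnt_eq (fun b a => q a b) (fun b a => hq a b)]
  have h1 : margFst (fun b a => q a b) = margSnd q := rfl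
  have h2 : margSnd (fun b a => q a b) = margFst q := rfl
  rw [h1]
  simp only [ent]
  rw [show (∑ b, ∑ a, (fun (b : B) (a : A) => q a b) b a * Real.log ((fun (b : B) (a : A) => q a b) b a))
      = ∑ a, ∑ b, q a b * Real.log (q a b) from Finset.sum_comm]
  ring

lemma margFst_jointXT {X Y T : Type*} [Fintype Y] [Fintype T] (p : X → Y → ℝ)
    (κ : X → T → ℝ) (hκ : ∀ x, ∑ t, κ x t = 1) (x : X) :
    margFst (jointXT p κ) x = margFst p x := by
  simp only [margFst, jointXT]
  rw [← Finset.mul_sum, hκ x, mul_one]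

lemma condEnt_jointXT {X Y T : Type*} [Fintype X] [Fintype Y] [Fintype T] (p : X → Y → ℝ)
    (κ : X → T → ℝ) (hκ : ∀ x, ∑ t, κ x t = 1) :
    condEnt (jointXT p κ) = ∑ x, margFst p x * ∑ t, Real.negMulLog (κ x t) := by
  have key : ∀ x t, -(jointXT p κ x t * Real.log (jointXT p κ x t / margFst (jointXT p κ) x))
      = margFst p x * Real.negMulLog (κ x t) := by
    intro x t
    rw [margFst_jointXT p κ hκ x]
    have hj : jointXT p κ x t = margFst p x * κ x t := rfl
    rcases eq_or_ne (margFst p x) 0 with h0 | hne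
    · rw [hj, h0]; simp
    · rw [hj, mul_div_cancel_left₀ _ hne, Real.negMulLog]
      ring
  have hrow : ∀ x, ∑ t, jointXT p κ x t * Real.log (jointXT p κ x t / margFst (jointXT p κ) x)
      = -(margFst p x * ∑ t, Real.negMulLog (κ x t)) := by
    intro x
    rw [Finset.mul_sum, ← Finset.sum_neg_distrib]
    refine Finset.sum_congr rfl (fun t _ => ?_)
    have := key x t
    linarith
  rw [condEnt, Finset.sum_congr rfl (fun x _ => hrow x), Finset.sum_neg_distrib, neg_neg]

lemma margSnd_jointTY {X Y T : Type*} [Fintype X] [Fintype Y] [Fintype T] (p : X → Y → ℝ)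
    (κ : X → T → ℝ) (hκ : ∀ x, ∑ t, κ x t = 1) :
    margSnd (jointTY p κ) = margSnd p := by
  funext y
  simp only [margSnd, jointTY]
  rw [Finset.sum_comm]
  refine Finset.sum_congr rfl (fun x _ => ?_)
  rw [← Finset.mul_sum, hκ x, mul_one]

lemma margFst_jointTY {X Y T : Type*} [Fintype X] [Fintype Y] [Fintype T] (p : X → Y → ℝ)
    (κ : X → T → ℝ) :
    margFst (jointTY p κ) = margSnd (jointXT p κ) := by
  funext t
  simp only [margFst, margSnd, jointTY, jointXT]
  rw [Finset.sum_comm]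
  exact Finset.sum_congr rfl (fun x _ => by rw [← Finset.sum_mul])

lemma margFst_jointYT {X Y T : Type*} [Fintype X] [Fintype Y] [Fintype T] (p : X → Y → ℝ)
    (κ : X → T → ℝ) (hκ : ∀ x, ∑ t, κ x t = 1) (y : Y) :
    margFst (jointYT p κ) y = margSnd p y := by
  simp only [margFst, jointYT, margSnd]
  rw [Finset.sum_comm]
  refine Finset.sum_congr rfl (fun x _ => ?_)
  rw [← Finset.mul_sum, hκ x, mul_one]

lemma dpi {X Y T : Type*} [Fintype X] [Fintype Y] [Fintype T] (p : X → Y → ℝ)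
    (κ : X → T → ℝ) (hp0 : ∀ x y, 0 ≤ p x y) (hκ : IsChannel κ) :
    mi (jointTY p κ) ≤ mi (jointXT p κ) := by
  have hκ1 : ∀ x, ∑ t, κ x t = 1 := fun x => (hκ x).2
  have hκ0 : ∀ x t, 0 ≤ κ x t := fun x t => (hκ x).1 t
  have hκle1 : ∀ x t, κ x t ≤ 1 := fun x t => by
    rw [← hκ1 x]; exact Finset.single_le_sum (fun t' _ => hκ0 x t') (Finset.mem_univ t)
  have hTY0 : ∀ t y, 0 ≤ jointTY p κ t y := fun t y =>
    Finset.sum_nonneg (fun x _ => mul_nonneg (hp0 x y) (hκ0 x t))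
  have hswap : mi (jointTY p κ) = ent (margFst (jointTY p κ)) - condEnt (jointYT p κ) := by
    rw [mi, mi_swap _ hTY0]
    rfl
  rw [hswap, mi, margFst_jointTY p κ]
  have key : condEnt (jointXT p κ) ≤ condEnt (jointYT p κ) := by
    rw [condEnt_jointXT p κ hκ1]
    have hL : ∑ x, margFst p x * ∑ t, Real.negMulLog (κ x t)
        = ∑ y, ∑ t, ∑ x, p x y * Real.negMulLog (κ x t) := by
      calc ∑ x, margFst p x * ∑ t, Real.negMulLog (κ x t)
          = ∑ x, ∑ y, (p x y * ∑ t, Real.negMulLog (κ x t)) := by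
            refine Finset.sum_congr rfl (fun x _ => ?_)
            rw [margFst, Finset.sum_mul]
        _ = ∑ y, ∑ x, (p x y * ∑ t, Real.negMulLog (κ x t)) := Finset.sum_comm
        _ = ∑ y, ∑ x, ∑ t, p x y * Real.negMulLog (κ x t) := by
            refine Finset.sum_congr rfl (fun y _ => Finset.sum_congr rfl (fun x _ => ?_))
            rw [Finset.mul_sum]
        _ = ∑ y, ∑ t, ∑ x, p x y * Real.negMulLog (κ x t) := by
            exact Finset.sum_congr rfl (fun y _ => Finset.sum_comm)
    rw [hL, condEnt, ← Finset.sum_neg_distrib]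
    apply Finset.sum_le_sum
    intro y _
    rw [← Finset.sum_neg_distrib]
    apply Finset.sum_le_sum
    intro t _
    rw [margFst_jointYT p κ hκ1 y]
    have hj : jointYT p κ y t = ∑ x, p x y * κ x t := rfl
    have hJ := jensen_eta Finset.univ (fun x => p x y) (fun x => κ x t)
      (fun x _ => hp0 x y) (fun x _ => hκ0 x t)
    have hpy : (∑ x, p x y) = margSnd p y := rfl
    rw [hpy] at hJ
    set J := ∑ x, p x y * κ x t with hJdef
    have hJ0 : 0 ≤ J := Finset.sum_nonneg (fun x _ => mul_nonneg (hp0 x y) (hκ0 x t))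
    have hJle : J ≤ margSnd p y := by
      rw [← hpy]
      exact Finset.sum_le_sum (fun x _ => by
        nlinarith [hp0 x y, hκle1 x t, hκ0 x t])
    rw [hj]
    rcases eq_or_lt_of_le hJ0 with h0 | hJpos
    · rw [← h0] at hJ ⊢
      simp only [Real.negMulLog_zero, zero_mul, mul_zero, add_zero, neg_zero, zero_add] at hJ ⊢
      linarith [hJ]
    · have hpypos : 0 < margSnd p y := lt_of_lt_of_le hJpos hJle
      have hident : Real.negMulLog J + J * Real.log (margSnd p y)
          = -(J * Real.log (J / margSnd p y)) := by
        rw [Real.negMulLog, Real.log_div (ne_of_gt hJpos) (ne_of_gt hpypos)]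
        ring
      linarith [hJ]
  linarith

lemma sum_eta_le {Y : Type*} [Fintype Y] (d : Y → ℝ) (hd : ∀ y, 0 ≤ d y) :
    ∑ y, Real.negMulLog (d y)
      ≤ Real.negMulLog (∑ y, d y) + (∑ y, d y) * Real.log (Fintype.card Y) := by
  have h := jensen_eta Finset.univ (fun _ : Y => (1:ℝ)) d
    (fun _ _ => zero_le_one) (fun y _ => hd y)
  simp only [one_mul, Finset.sum_const, Finset.card_univ, nsmul_eq_mul, mul_one] at h
  exact h

lemma ent_close {Y : Type*} [Fintype Y] (u v : Y → ℝ)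
    (hu : ∀ y, 0 ≤ u y) (hu1 : ∀ y, u y ≤ 1) (hv : ∀ y, 0 ≤ v y) (hv1 : ∀ y, v y ≤ 1) :
    ent u - ent v ≤ Real.negMulLog (∑ y, |u y - v y|)
      + (∑ y, |u y - v y|) * (Real.log (Fintype.card Y) + 1) := by
  have h1 : ent u - ent v ≤ ∑ y, (Real.negMulLog |u y - v y| + |u y - v y|) := by
    rw [ent_eq, ent_eq, ← Finset.sum_sub_distrib]
    apply Finset.sum_le_sum
    intro y _
    have h := eta_diff_le (hu y) (hu1 y) (hv y) (hv1 y)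
    calc Real.negMulLog (u y) - Real.negMulLog (v y)
        ≤ |Real.negMulLog (u y) - Real.negMulLog (v y)| := le_abs_self _
      _ ≤ _ := h
  rw [Finset.sum_add_distrib] at h1
  have h2 := sum_eta_le (fun y => |u y - v y|) (fun y => abs_nonneg _)
  nlinarith [h1, h2]

lemma condEnt_le_det {Z Y : Type*} [Fintype Z] [Fintype Y] (u v : Z → Y → ℝ) (g : Z → Y)
    (hu : ∀ z y, 0 ≤ u z y) (hv : ∀ z y, 0 ≤ v z y)
    (hm : ∀ z, margFst u z = margFst v z)
    (hmsum : ∑ z, margFst u z = 1)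
    (hdet : ∀ z y, y ≠ g z → v z y = 0) :
    condEnt u ≤ Real.negMulLog (l1 u v) + l1 u v * (Real.log (Fintype.card Y) + 1) := by
  classical
  set m : Z → ℝ := fun z => margFst u z with hmdef
  set D : Z → ℝ := fun z => ∑ y, |u z y - v z y| with hDdef
  have hD0 : ∀ z, 0 ≤ D z := fun z => Finset.sum_nonneg (fun y _ => abs_nonneg _)
  have hm0 : ∀ z, 0 ≤ m z := fun z => margFst_nonneg u hu z
  -- v z (g z) = m z
  have hvg : ∀ z, v z (g z) = m z := by
    intro z
    rw [hmdef]
    simp only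
    rw [hm z, margFst]
    exact (Finset.sum_eq_single_of_mem (g z) (Finset.mem_univ _)
      (fun y _ hy => hdet z y hy)).symm
  set xz : Z → ℝ := fun z => if m z = 0 then 0 else D z / m z with hxz
  have hmx : ∀ z, m z * xz z = D z := by
    intro z
    rw [hxz]
    simp only
    rcases eq_or_ne (m z) 0 with h0 | hne
    · rw [h0, if_pos rfl, mul_zero]
      -- D z = 0 : u z y = 0 and v z y = 0
      have hu0 : ∀ y, u z y = 0 := by
        intro y
        have h1 := le_margFst u hu z y
        have h2 := hu z y
        have h3 : margFst u z = 0 := h0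
        linarith
      have hv0 : ∀ y, v z y = 0 := by
        intro y
        have h1 := le_margFst v hv z y
        have h2 := hv z y
        have h3 : margFst v z = 0 := by rw [← hm z]; exact h0
        linarith
      rw [hDdef]
      simp only
      symm
      apply Finset.sum_eq_zero
      intro y _
      rw [hu0 y, hv0 y]
      simp
    · rw [if_neg hne]
      field_simp
  -- row bound
  have hrow : ∀ z, -(∑ y, u z y * Real.log (u z y / m z))
      ≤ m z * Real.negMulLog (xz z) + D z * (Real.log (Fintype.card Y) + 1) := by
    intro z
    rcases eq_or_ne (m z) 0 with h0 | hne
    · have hu0 : ∀ y, u z y = 0 := by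
        intro y
        have h1 := le_margFst u hu z y
        have h2 := hu z y
        have h3 : margFst u z = 0 := h0
        linarith
      have hD0' : D z = 0 := by
        have := hmx z
        rw [h0, zero_mul] at this
        linarith [this]
      rw [hD0']
      have : ∀ y, u z y * Real.log (u z y / m z) = 0 := fun y => by rw [hu0 y]; ring
      rw [Finset.sum_congr rfl (fun y _ => this y)]
      simp [Real.negMulLog_zero, hxz, h0]
    · have hmpos : 0 < m z := lt_of_le_of_ne (hm0 z) (Ne.symm hne)
      -- pointwise
      have hpt : ∀ y, -(u z y * Real.log (u z y / m z))
          ≤ m z * Real.negMulLog (|u z y - v z y| / m z) + |u z y - v z y| := by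
        intro y
        have hub : u z y ≤ m z := le_margFst u hu z y
        have hvb : v z y ≤ m z := by
          have h1 := le_margFst v hv z y
          have h3 : margFst v z = m z := (hm z).symm
          linarith
        have ha1 : u z y / m z ≤ 1 := (div_le_one hmpos).2 hub
        have ha0 : 0 ≤ u z y / m z := div_nonneg (hu z y) hmpos.le
        have hb1 : v z y / m z ≤ 1 := (div_le_one hmpos).2 hvb
        have hb0 : 0 ≤ v z y / m z := div_nonneg (hv z y) hmpos.le
        have heta : Real.negMulLog (v z y / m z) = 0 := by
          rcases eq_or_ne y (g z) with rfl | hy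
          · rw [hvg z, div_self hne]
            exact Real.negMulLog_one
          · rw [hdet z y hy]
            simp
        have hdiff := eta_diff_le ha0 ha1 hb0 hb1
        rw [heta, sub_zero] at hdiff
        have habs : |u z y / m z - v z y / m z| = |u z y - v z y| / m z := by
          rw [div_sub_div_same, abs_div, abs_of_pos hmpos]
        rw [habs] at hdiff
        have hkey : -(u z y * Real.log (u z y / m z)) = m z * Real.negMulLog (u z y / m z) := by
          rw [Real.negMulLog]
          field_simp
        rw [hkey]
        have := le_abs_self (Real.negMulLog (u z y / m z))
        have hchain : Real.negMulLog (u z y / m z)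
            ≤ Real.negMulLog (|u z y - v z y| / m z) + |u z y - v z y| / m z := le_trans this hdiff
        have := mul_le_mul_of_nonneg_left hchain hmpos.le
        have heq : m z * (|u z y - v z y| / m z) = |u z y - v z y| := by field_simp
        nlinarith [this]
      -- sum over y
      have hsum1 : -(∑ y, u z y * Real.log (u z y / m z))
          ≤ ∑ y, (m z * Real.negMulLog (|u z y - v z y| / m z)) + D z := by
        rw [← Finset.sum_neg_distrib, hDdef]
        simp only
        rw [← Finset.sum_add_distrib]
        exact Finset.sum_le_sum (fun y _ => hpt y)
      have hsum2 : ∑ y, (m z * Real.negMulLog (|u z y - v z y| / m z))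
          ≤ m z * (Real.negMulLog (D z / m z) + (D z / m z) * Real.log (Fintype.card Y)) := by
        rw [← Finset.mul_sum]
        apply mul_le_mul_of_nonneg_left _ hmpos.le
        have := sum_eta_le (fun y => |u z y - v z y| / m z)
          (fun y => div_nonneg (abs_nonneg _) hmpos.le)
        rw [← Finset.sum_div] at this
        have hD : D z = ∑ y, |u z y - v z y| := rfl
        rw [hD]
        exact this
      have hxzval : xz z = D z / m z := by rw [hxz]; simp only; rw [if_neg hne]
      have hexp : m z * (Real.negMulLog (D z / m z) + (D z / m z) * Real.log (Fintype.card Y))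
          = m z * Real.negMulLog (D z / m z) + D z * Real.log (Fintype.card Y) := by
        field_simp
      rw [hxzval]
      have hc1 : D z * (Real.log (Fintype.card Y) + 1) = D z * Real.log (Fintype.card Y) + D z := by ring
      linarith [hsum1, hsum2]
  -- assemble over z
  have hl1 : l1 u v = ∑ z, D z := rfl
  have htotal : condEnt u ≤ ∑ z, m z * Real.negMulLog (xz z) + (∑ z, D z) * (Real.log (Fintype.card Y) + 1) := by
    rw [condEnt, ← Finset.sum_neg_distrib, Finset.sum_mul, ← Finset.sum_add_distrib]
    exact Finset.sum_le_sum (fun z _ => hrow z)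
  have hjz := jensen_eta Finset.univ m xz (fun z _ => hm0 z)
    (fun z _ => by
      rw [hxz]; simp only
      rcases eq_or_ne (m z) 0 with h0 | hne
      · rw [if_pos h0]
      · rw [if_neg hne]
        exact div_nonneg (hD0 z) (hm0 z))
  have hmxsum : ∑ z, m z * xz z = ∑ z, D z := Finset.sum_congr rfl (fun z _ => hmx z)
  rw [hmxsum, hmsum, Real.log_one, mul_zero, add_zero] at hjz
  rw [hl1]
  linarith [htotal, hjz]

def Qdist {X Y : Type*} [Fintype X] [DecidableEq Y] (p : X → Y → ℝ) (f : X → Y) :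
    Y → Y → ℝ := fun z y => ∑ x, if f x = z then p x y else 0

lemma kappa_some {X Y : Type*} [DecidableEq Y] (f : X → Y) (α : ℝ) (x : X) (s : Y) :
    kappaAlpha f α x (some s) = if f x = s then α else 0 := by
  rw [kappaAlpha]
  simp only [Option.some.injEq, reduceCtorEq, if_false, mul_zero, add_zero]
  rcases eq_or_ne (f x) s with h | h
  · rw [if_pos h.symm, if_pos h, mul_one]
  · rw [if_neg (Ne.symm h), if_neg h, mul_zero]

lemma kappa_none {X Y : Type*} [DecidableEq Y] (f : X → Y) (α : ℝ) (x : X) :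
    kappaAlpha f α x none = 1 - α := by
  simp [kappaAlpha]

lemma kappa_sum {X Y : Type*} [Fintype Y] [DecidableEq Y] (f : X → Y) (α : ℝ) (x : X) :
    ∑ t, kappaAlpha f α x t = 1 := by
  rw [Fintype.sum_option, kappa_none]
  have : ∑ s, kappaAlpha f α x (some s) = α := by
    rw [Finset.sum_congr rfl (fun s _ => kappa_some f α x s)]
    simp
  rw [this]
  ring

lemma kappa_channel {X Y : Type*} [Fintype Y] [DecidableEq Y] (f : X → Y) (α : ℝ)
    (h0 : 0 ≤ α) (h1 : α ≤ 1) : IsChannel (kappaAlpha f α) := by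
  intro x
  refine ⟨fun t => ?_, kappa_sum f α x⟩
  match t with
  | none => rw [kappa_none]; linarith
  | some s =>
    rw [kappa_some]
    split <;> linarith

lemma ptilde_row {X Y : Type*} [Fintype X] [Fintype Y] [DecidableEq Y]
    (ptilde : X → Y → ℝ) (f : X → Y) (hdet : Determ ptilde f) (x : X) (y : Y) :
    ptilde x y = if f x = y then margFst ptilde x else 0 := by
  rcases eq_or_ne (f x) y with h | h
  · rw [if_pos h, margFst]
    exact (Finset.sum_eq_single_of_mem y (Finset.mem_univ _)
      (fun y' _ hy' => hdet x y' (by rw [h]; exact hy'))).symm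
  · rw [if_neg h]
    exact hdet x y (Ne.symm h)

lemma beta_log_cancel (β v : ℝ) : β * v * Real.log (β * v / β) = β * (v * Real.log v) := by
  rcases eq_or_ne β 0 with h0 | hne
  · rw [h0]; simp
  · rw [mul_div_cancel_left₀ _ hne]; ring

lemma mi_jointXT_kappa {X Y : Type*} [Fintype X] [Fintype Y] [DecidableEq Y]
    (p ptilde : X → Y → ℝ) (f : X → Y) (α : ℝ)
    (hp1 : ∑ x, ∑ y, p x y = 1)
    (hpt1 : ∑ x, ∑ y, ptilde x y = 1)
    (hmarg : ∀ x, margFst p x = margFst ptilde x)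
    (hdet : Determ ptilde f) :
    mi (jointXT p (kappaAlpha f α)) = α * ent (margSnd ptilde) := by
  have hpsum : ∑ x, margFst p x = 1 := hp1
  have hmZsum : ∑ s, margSnd ptilde s = 1 := by
    simp only [margSnd]; exact Finset.sum_comm.trans hpt1
  have hmZ : ∀ s, margSnd ptilde s = ∑ x, (if f x = s then margFst p x else 0) := by
    intro s
    rw [margSnd]
    refine Finset.sum_congr rfl (fun x _ => ?_)
    rw [ptilde_row ptilde f hdet x s, hmarg x]
  have hjXT : ∀ x t, jointXT p (kappaAlpha f α) x t = margFst p x * kappaAlpha f α x t :=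
    fun x t => rfl
  have hms : ∀ s, margSnd (jointXT p (kappaAlpha f α)) (some s) = α * margSnd ptilde s := by
    intro s
    rw [margSnd, hmZ s, Finset.mul_sum]
    refine Finset.sum_congr rfl (fun x _ => ?_)
    rw [hjXT, kappa_some]
    split <;> ring
  have hmn : margSnd (jointXT p (kappaAlpha f α)) none = 1 - α := by
    rw [margSnd]
    have : ∀ x, jointXT p (kappaAlpha f α) x none = margFst p x * (1 - α) := by
      intro x; rw [hjXT, kappa_none]
    rw [Finset.sum_congr rfl (fun x _ => this x), ← Finset.sum_mul, hpsum, one_mul]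
  have hent : ent (margSnd (jointXT p (kappaAlpha f α)))
      = Real.negMulLog (1 - α) + Real.negMulLog α + α * ent (margSnd ptilde) := by
    rw [ent_eq, Fintype.sum_option, hmn]
    have hsome : ∑ s, Real.negMulLog (margSnd (jointXT p (kappaAlpha f α)) (some s))
        = Real.negMulLog α + α * ent (margSnd ptilde) := by
      have h1 : ∀ s, Real.negMulLog (margSnd (jointXT p (kappaAlpha f α)) (some s))
          = margSnd ptilde s * Real.negMulLog α + α * Real.negMulLog (margSnd ptilde s) := by
        intro s
        rw [hms s, Real.negMulLog_mul]
      rw [Finset.sum_congr rfl (fun s _ => h1 s), Finset.sum_add_distrib,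
        ← Finset.sum_mul, hmZsum, one_mul, ← Finset.mul_sum, ← ent_eq]
    rw [hsome]
    ring
  have hcond : condEnt (jointXT p (kappaAlpha f α))
      = Real.negMulLog (1 - α) + Real.negMulLog α := by
    rw [condEnt_jointXT p _ (kappa_sum f α)]
    have hinner : ∀ x, ∑ t, Real.negMulLog (kappaAlpha f α x t)
        = Real.negMulLog (1 - α) + Real.negMulLog α := by
      intro x
      rw [Fintype.sum_option, kappa_none]
      have : ∀ s, Real.negMulLog (kappaAlpha f α x (some s))
          = if f x = s then Real.negMulLog α else 0 := by
        intro s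
        rw [kappa_some]
        split <;> simp
      rw [Finset.sum_congr rfl (fun s _ => this s), Finset.sum_ite_eq]
      simp
    rw [Finset.sum_congr rfl (fun x _ => by rw [hinner x]), ← Finset.sum_mul, hpsum, one_mul]
  rw [mi, hent, hcond]
  ring

lemma mi_jointTY_kappa {X Y : Type*} [Fintype X] [Fintype Y] [DecidableEq Y]
    (p : X → Y → ℝ) (f : X → Y) (α : ℝ)
    (hp1 : ∑ x, ∑ y, p x y = 1) :
    mi (jointTY p (kappaAlpha f α)) = α * (ent (margSnd p) - condEnt (Qdist p f)) := by
  have hpY1 : ∑ y, margSnd p y = 1 := by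
    simp only [margSnd]; exact Finset.sum_comm.trans hp1
  have hsome : ∀ s y, jointTY p (kappaAlpha f α) (some s) y = α * Qdist p f s y := by
    intro s y
    rw [jointTY, Qdist, Finset.mul_sum]
    refine Finset.sum_congr rfl (fun x _ => ?_)
    rw [kappa_some]
    split <;> ring
  have hnone : ∀ y, jointTY p (kappaAlpha f α) none y = (1 - α) * margSnd p y := by
    intro y
    rw [jointTY, margSnd, Finset.mul_sum]
    refine Finset.sum_congr rfl (fun x _ => ?_)
    rw [kappa_none]
    ring
  have hmfs : ∀ s, margFst (jointTY p (kappaAlpha f α)) (some s)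
      = α * margFst (Qdist p f) s := by
    intro s
    rw [margFst, margFst, Finset.mul_sum]
    exact Finset.sum_congr rfl (fun y _ => hsome s y)
  have hmfn : margFst (jointTY p (kappaAlpha f α)) none = 1 - α := by
    rw [margFst]
    rw [Finset.sum_congr rfl (fun y _ => hnone y), ← Finset.mul_sum, hpY1, mul_one]
  have hmsnd : margSnd (jointTY p (kappaAlpha f α)) = margSnd p :=
    margSnd_jointTY p _ (kappa_sum f α)
  have hcond : condEnt (jointTY p (kappaAlpha f α))
      = (1 - α) * ent (margSnd p) + α * condEnt (Qdist p f) := by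
    rw [condEnt, Fintype.sum_option]
    have hrow_none : ∑ y, jointTY p (kappaAlpha f α) none y *
        Real.log (jointTY p (kappaAlpha f α) none y / margFst (jointTY p (kappaAlpha f α)) none)
        = (1 - α) * (∑ y, margSnd p y * Real.log (margSnd p y)) := by
      rw [Finset.mul_sum]
      refine Finset.sum_congr rfl (fun y _ => ?_)
      rw [hnone y, hmfn]
      exact beta_log_cancel (1 - α) (margSnd p y)
    have hrow_some : ∀ s, ∑ y, jointTY p (kappaAlpha f α) (some s) y *
        Real.log (jointTY p (kappaAlpha f α) (some s) y
          / margFst (jointTY p (kappaAlpha f α)) (some s))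
        = α * ∑ y, Qdist p f s y * Real.log (Qdist p f s y / margFst (Qdist p f) s) := by
      intro s
      rw [Finset.mul_sum]
      refine Finset.sum_congr rfl (fun y _ => ?_)
      rw [hsome s y, hmfs s]
      rcases eq_or_ne α 0 with h0 | hne
      · rw [h0]; ring_nf
      · rw [mul_div_mul_left _ _ hne]; ring
    rw [hrow_none, Finset.sum_congr rfl (fun s _ => hrow_some s), ← Finset.mul_sum]
    rw [condEnt, ent]
    ring
  rw [mi, hmsnd, hcond]
  ring

lemma log_le_div_e {t : ℝ} (ht : 0 < t) : Real.log t ≤ t / Real.exp 1 := by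
  have h := Real.log_le_sub_one_of_pos (x := t / Real.exp 1) (by positivity)
  rw [Real.log_div (ne_of_gt ht) (ne_of_gt (Real.exp_pos 1)), Real.log_exp] at h
  linarith

lemma eta_le_of_le {δ ε : ℝ} (hδ0 : 0 ≤ δ) (hδε : δ ≤ ε) (hε : 0 < ε) :
    Real.negMulLog δ ≤ -δ * Real.log ε + ε / Real.exp 1 := by
  rcases eq_or_lt_of_le hδ0 with h0 | hδpos
  · rw [← h0]
    simp only [Real.negMulLog_zero, neg_zero, zero_mul, zero_add]
    positivity
  · have h1 : Real.log (ε / δ) ≤ (ε / δ) / Real.exp 1 := log_le_div_e (by positivity)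
    have h2 : δ * Real.log (ε / δ) ≤ ε / Real.exp 1 := by
      have h3 := mul_le_mul_of_nonneg_left h1 hδ0
      have h4 : δ * (ε / δ / Real.exp 1) = ε / Real.exp 1 := by
        field_simp
      linarith
    have h5 : Real.log (ε / δ) = Real.log ε - Real.log δ :=
      Real.log_div (ne_of_gt hε) (ne_of_gt hδpos)
    rw [h5] at h2
    rw [Real.negMulLog]
    nlinarith [h2]

lemma key_budget {δ1 δ2 ε : ℝ} (c : ℕ) (hc : 2 ≤ c)
    (h10 : 0 ≤ δ1) (h1ε : δ1 ≤ ε) (h20 : 0 ≤ δ2) (h2ε : δ2 ≤ ε) (hε : ε ≤ 1/2) :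
    (Real.negMulLog δ1 + δ1 * (Real.log c + 1))
      + (Real.negMulLog δ2 + δ2 * (Real.log c + 1)) ≤ gam ε c := by
  have hε0 : 0 ≤ ε := le_trans h10 h1ε
  rcases eq_or_lt_of_le hε0 with h0 | hεpos
  · have hδ10 : δ1 = 0 := le_antisymm (h0 ▸ h1ε) h10
    have hδ20 : δ2 = 0 := le_antisymm (h0 ▸ h2ε) h20
    rw [hδ10, hδ20, ← h0]
    simp [gam]
  · have hL2 : Real.log 2 ≤ -Real.log ε := by
      have h1 : Real.log ε ≤ Real.log (1/2) := Real.log_le_log hεpos hε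
      have h2 : Real.log ((1:ℝ)/2) = -Real.log 2 := by
        rw [one_div, Real.log_inv]
      linarith
    have hlogc : Real.log 2 ≤ Real.log c :=
      Real.log_le_log (by norm_num) (by exact_mod_cast hc)
    have hlog2pos : (0:ℝ) < Real.log 2 := Real.log_pos (by norm_num)
    have he1 := eta_le_of_le h10 h1ε hεpos
    have he2 := eta_le_of_le h20 h2ε hεpos
    have hnum : 2 / Real.exp 1 + 2 ≤ 4 * Real.log 2 := by
      have h1 : (2.7182818283 : ℝ) < Real.exp 1 := Real.exp_one_gt_d9
      have h2 : (0.6931471803 : ℝ) < Real.log 2 := Real.log_two_gt_d9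
      have hepos : (0:ℝ) < Real.exp 1 := Real.exp_pos 1
      have h3 : 2 / Real.exp 1 < 2 / 2.7182818283 :=
        div_lt_div_of_pos_left (by norm_num) (by norm_num) h1
      nlinarith
    rw [gam]
    -- bound each piece
    have hd1 : -δ1 * Real.log ε ≤ -ε * Real.log ε := by nlinarith [hL2, hlog2pos]
    have hd2 : -δ2 * Real.log ε ≤ -ε * Real.log ε := by nlinarith [hL2, hlog2pos]
    have hc1 : δ1 * (Real.log c + 1) ≤ ε * (Real.log c + 1) := by
      apply mul_le_mul_of_nonneg_right h1ε
      nlinarith [hlogc, hlog2pos]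
    have hc2 : δ2 * (Real.log c + 1) ≤ ε * (Real.log c + 1) := by
      apply mul_le_mul_of_nonneg_right h2ε
      nlinarith [hlogc, hlog2pos]
    -- total: 2(-ε log ε) + 2ε/e + 2ε log c + 2ε ≤ 3(-ε log ε) + 5 ε log c
    have hfin : 2 * (ε / Real.exp 1) + 2 * ε ≤ (-ε * Real.log ε) + 3 * (ε * Real.log c) := by
      have e1 : ε * (2 / Real.exp 1 + 2) ≤ ε * (4 * Real.log 2) :=
        mul_le_mul_of_nonneg_left hnum hε0
      have e2 : ε * Real.log 2 ≤ ε * (-Real.log ε) := mul_le_mul_of_nonneg_left hL2 hε0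
      have e3 : ε * Real.log 2 ≤ ε * Real.log c := mul_le_mul_of_nonneg_left hlogc hε0
      have e4 : ε * (2 / Real.exp 1 + 2) = 2 * (ε / Real.exp 1) + 2 * ε := by ring
      have e5 : ε * (-Real.log ε) = -ε * Real.log ε := by ring
      linarith
    nlinarith [he1, he2, hd1, hd2, hc1, hc2, hfin]

lemma Qdist_nonneg {X Y : Type*} [Fintype X] [DecidableEq Y] (p : X → Y → ℝ)
    (hp0 : ∀ x y, 0 ≤ p x y) (f : X → Y) (z y : Y) : 0 ≤ Qdist p f z y :=
  Finset.sum_nonneg (fun x _ => by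
    split
    · exact hp0 x y
    · exact le_refl 0)

lemma margFst_Qdist {X Y : Type*} [Fintype X] [Fintype Y] [DecidableEq Y] (p : X → Y → ℝ)
    (f : X → Y) (z : Y) :
    margFst (Qdist p f) z = ∑ x, (if f x = z then margFst p x else 0) := by
  simp only [margFst, Qdist]
  rw [Finset.sum_comm]
  refine Finset.sum_congr rfl (fun x _ => ?_)
  split
  · rfl
  · exact Finset.sum_const_zero

theorem trivial_solutions_near_IB_curve {X Y : Type*} [Fintype X] [Fintype Y] [DecidableEq Y]
    (p ptilde : X → Y → ℝ) (f : X → Y) (ε : ℝ)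
    (hp : IsJoint p) (hptilde : IsJoint ptilde) (hdet : Determ ptilde f)
    (hmarg : ∀ x, margFst p x = margFst ptilde x)
    (hl1 : l1 p ptilde ≤ ε) (hε : ε ≤ 1/2) :
    ∀ r > 0, ∃ α ∈ Set.Icc (0:ℝ) 1,
      mi (jointXT p (kappaAlpha f α)) ≤ r ∧
      mi (jointTY p (kappaAlpha f α)) ≥ IBcurve p r - gam ε (Fintype.card Y) := by
  classical
  intro r hr
  obtain ⟨hp0, hp1⟩ := hp
  obtain ⟨hpt0, hpt1⟩ := hptilde
  set HY := ent (margSnd p) with hHY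
  set HZ := ent (margSnd ptilde) with hHZ
  set CQ := condEnt (Qdist p f) with hCQ
  set c := Fintype.card Y with hc
  have hYne : Nonempty Y := by
    by_contra h
    rw [not_nonempty_iff] at h
    have h0 : ∑ x, ∑ y, p x y = 0 :=
      Finset.sum_eq_zero (fun x _ => by rw [Finset.univ_eq_empty, Finset.sum_empty])
    rw [hp1] at h0
    exact one_ne_zero h0
  haveI := hYne
  have hc1 : 1 ≤ c := by rw [hc]; exact Fintype.card_pos
  have hl1_0 : 0 ≤ l1 p ptilde :=
    Finset.sum_nonneg (fun x _ => Finset.sum_nonneg (fun y _ => abs_nonneg _))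
  have hε0 : 0 ≤ ε := le_trans hl1_0 hl1
  have hpYsum : ∑ y, margSnd p y = 1 := by
    simp only [margSnd]; exact Finset.sum_comm.trans hp1
  have hmZsum : ∑ y, margSnd ptilde y = 1 := by
    simp only [margSnd]; exact Finset.sum_comm.trans hpt1
  have hpY0 : ∀ y, 0 ≤ margSnd p y := fun y => Finset.sum_nonneg (fun x _ => hp0 x y)
  have hmZ0 : ∀ y, 0 ≤ margSnd ptilde y := fun y => Finset.sum_nonneg (fun x _ => hpt0 x y)
  have hpYle1 : ∀ y, margSnd p y ≤ 1 := fun y => by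
    rw [← hpYsum]; exact Finset.single_le_sum (fun y' _ => hpY0 y') (Finset.mem_univ y)
  have hmZle1 : ∀ y, margSnd ptilde y ≤ 1 := fun y => by
    rw [← hmZsum]; exact Finset.single_le_sum (fun y' _ => hmZ0 y') (Finset.mem_univ y)
  set δ1 := ∑ y, |margSnd ptilde y - margSnd p y| with hδ1
  set δ2 := l1 (Qdist p f) (Qdist ptilde f) with hδ2
  have hδ10 : 0 ≤ δ1 := Finset.sum_nonneg (fun y _ => abs_nonneg _)
  have hδ20 : 0 ≤ δ2 :=
    Finset.sum_nonneg (fun z _ => Finset.sum_nonneg (fun y _ => abs_nonneg _))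
  have hδ1ε : δ1 ≤ ε := by
    refine le_trans ?_ hl1
    rw [hδ1]
    have step : ∀ y, |margSnd ptilde y - margSnd p y| ≤ ∑ x, |p x y - ptilde x y| := by
      intro y
      have h1 : margSnd ptilde y - margSnd p y = ∑ x, (ptilde x y - p x y) := by
        simp only [margSnd]; rw [← Finset.sum_sub_distrib]
      rw [h1]
      refine le_trans (Finset.abs_sum_le_sum_abs _ _) ?_
      exact le_of_eq (Finset.sum_congr rfl (fun x _ => abs_sub_comm _ _))
    refine le_trans (Finset.sum_le_sum (fun y _ => step y)) ?_
    rw [l1]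
    exact le_of_eq Finset.sum_comm
  have hδ2ε : δ2 ≤ ε := by
    refine le_trans ?_ hl1
    rw [hδ2, l1, l1]
    have step : ∀ z y, |Qdist p f z y - Qdist ptilde f z y|
        ≤ ∑ x, (if f x = z then |p x y - ptilde x y| else 0) := by
      intro z y
      have h1 : Qdist p f z y - Qdist ptilde f z y
          = ∑ x, (if f x = z then p x y - ptilde x y else 0) := by
        rw [Qdist, Qdist, ← Finset.sum_sub_distrib]
        refine Finset.sum_congr rfl (fun x _ => ?_)
        split <;> simp
      rw [h1]
      refine le_trans (Finset.abs_sum_le_sum_abs _ _) ?_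
      refine le_of_eq (Finset.sum_congr rfl (fun x _ => ?_))
      split <;> simp
    refine le_trans (Finset.sum_le_sum (fun z _ => Finset.sum_le_sum (fun y _ => step z y))) ?_
    have h2 : ∀ y, ∑ z, ∑ x, (if f x = z then |p x y - ptilde x y| else 0)
        = ∑ x, |p x y - ptilde x y| := by
      intro y
      rw [Finset.sum_comm]
      refine Finset.sum_congr rfl (fun x _ => ?_)
      rw [Finset.sum_ite_eq]
      simp
    calc ∑ z, ∑ y, ∑ x, (if f x = z then |p x y - ptilde x y| else 0)
        = ∑ y, ∑ z, ∑ x, (if f x = z then |p x y - ptilde x y| else 0) := Finset.sum_comm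
      _ = ∑ y, ∑ x, |p x y - ptilde x y| := Finset.sum_congr rfl (fun y _ => h2 y)
      _ = ∑ x, ∑ y, |p x y - ptilde x y| := Finset.sum_comm
      _ ≤ ∑ a, ∑ b, |p a b - ptilde a b| := le_refl _
  have hQ0 : ∀ z y, 0 ≤ Qdist p f z y := Qdist_nonneg p hp0 f
  have hQt0 : ∀ z y, 0 ≤ Qdist ptilde f z y := Qdist_nonneg ptilde hpt0 f
  have hmQ : ∀ z, margFst (Qdist p f) z = margFst (Qdist ptilde f) z := by
    intro z
    rw [margFst_Qdist, margFst_Qdist]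
    refine Finset.sum_congr rfl (fun x _ => ?_)
    rw [hmarg x]
  have hmQsum : ∑ z, margFst (Qdist p f) z = 1 := by
    have h1 : ∀ x, ∑ z, (if f x = z then margFst p x else 0) = margFst p x := by
      intro x; rw [Finset.sum_ite_eq]; simp
    rw [Finset.sum_congr rfl (fun z _ => margFst_Qdist p f z), Finset.sum_comm,
      Finset.sum_congr rfl (fun x _ => h1 x)]
    exact hp1
  have hQtdet : ∀ z y, y ≠ id z → Qdist ptilde f z y = 0 := by
    intro z y hy
    apply Finset.sum_eq_zero
    intro x _
    split
    · next h => exact hdet x y (by rw [h]; exact hy)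
    · rfl
  have hCQ0 : 0 ≤ CQ := condEnt_nonneg _ hQ0
  have hB2 : CQ ≤ Real.negMulLog δ2 + δ2 * (Real.log c + 1) :=
    condEnt_le_det (Qdist p f) (Qdist ptilde f) id hQ0 hQt0 hmQ hmQsum hQtdet
  have hB1 : HZ - HY ≤ Real.negMulLog δ1 + δ1 * (Real.log c + 1) :=
    ent_close (margSnd ptilde) (margSnd p) hmZ0 hmZle1 hpY0 hpYle1
  have hδ1le1 : δ1 ≤ 1 := le_trans hδ1ε (by linarith)
  have hlogc0 : 0 ≤ Real.log c := Real.log_nonneg (by exact_mod_cast hc1)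
  have hB10 : 0 ≤ Real.negMulLog δ1 + δ1 * (Real.log c + 1) := by
    have := Real.negMulLog_nonneg hδ10 hδ1le1
    nlinarith
  have hbudget : (Real.negMulLog δ1 + δ1 * (Real.log c + 1))
      + (Real.negMulLog δ2 + δ2 * (Real.log c + 1)) ≤ gam ε c := by
    rcases le_or_gt 2 c with h2c | h2c
    · exact key_budget c h2c hδ10 hδ1ε hδ20 hδ2ε hε
    · have hcard1 : Fintype.card Y = 1 := by rw [← hc]; omega
      obtain ⟨y0, hy0⟩ := Fintype.card_eq_one_iff.mp hcard1
      have hsum1 : ∀ g : Y → ℝ, ∑ y, g y = g y0 := fun g =>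
        Finset.sum_eq_single_of_mem y0 (Finset.mem_univ _) (fun b _ hb => absurd (hy0 b) hb)
      have hmZy0 : margSnd ptilde y0 = 1 := by rw [← hmZsum, hsum1]
      have hpYy0 : margSnd p y0 = 1 := by rw [← hpYsum, hsum1]
      have hδ1z : δ1 = 0 := by rw [hδ1, hsum1, hmZy0, hpYy0]; simp
      have hδ2z : δ2 = 0 := by
        rw [hδ2, l1, hsum1, hsum1]
        have hq : margFst (Qdist p f) y0 = Qdist p f y0 y0 := by
          simp only [margFst]; exact hsum1 _
        have hqt : margFst (Qdist ptilde f) y0 = Qdist ptilde f y0 y0 := by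
          simp only [margFst]; exact hsum1 _
        rw [← hq, ← hqt, hmQ y0]
        simp
      rw [hδ1z, hδ2z]
      simp only [Real.negMulLog_zero, zero_mul, add_zero, zero_add]
      rw [gam]
      have hlognp : Real.log ε ≤ 0 := Real.log_nonpos hε0 (by linarith)
      have h1 : 0 ≤ -(3*ε) * Real.log ε := by nlinarith
      have h2 : 0 ≤ 5*ε * Real.log c := by
        have := mul_nonneg hε0 hlogc0
        nlinarith
      linarith
  have hSup_le : ∀ M : ℝ, (∀ (n : ℕ) (κ : X → Fin n → ℝ), IsChannel κ →
      mi (jointXT p κ) ≤ r → mi (jointTY p κ) ≤ M) → IBcurve p r ≤ M := by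
    intro M hM
    rw [IBcurve]
    apply csSup_le
    · refine ⟨mi (jointTY p (fun _ (_ : Fin 1) => (1:ℝ))), 1, (fun _ _ => 1), ?_, ?_, rfl⟩
      · intro x; exact ⟨fun _ => zero_le_one, by simp⟩
      · have hent0 : ent (margSnd (jointXT p (fun _ (_ : Fin 1) => (1:ℝ)))) = 0 := by
          rw [ent_eq, Fin.sum_univ_one]
          have hm0 : margSnd (jointXT p (fun _ (_ : Fin 1) => (1:ℝ))) 0 = 1 := by
            simp only [margSnd, jointXT, mul_one]
            exact hp1
          rw [hm0, Real.negMulLog_one]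
        have hcond0 : condEnt (jointXT p (fun _ (_ : Fin 1) => (1:ℝ))) = 0 := by
          rw [condEnt_jointXT p _ (fun x => by simp)]
          simp [Real.negMulLog_one]
        rw [mi, hent0, hcond0]
        linarith
    · rintro v ⟨n, κ, hκ, hIxt, rfl⟩
      exact hM n κ hκ hIxt
  have hmixt : ∀ β : ℝ, mi (jointXT p (kappaAlpha f β)) = β * HZ :=
    fun β => mi_jointXT_kappa p ptilde f β hp1 hpt1 hmarg hdet
  have hmity : ∀ β : ℝ, mi (jointTY p (kappaAlpha f β)) = β * (HY - CQ) :=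
    fun β => mi_jointTY_kappa p f β hp1
  rcases le_or_gt HZ r with hcase | hcase
  · refine ⟨1, Set.mem_Icc.mpr ⟨zero_le_one, le_refl 1⟩, ?_, ?_⟩
    · rw [hmixt 1, one_mul]; exact hcase
    · rw [ge_iff_le, sub_le_iff_le_add, hmity 1, one_mul]
      apply hSup_le
      intro n κ hκ hIxt
      have hTY0 : ∀ t y, 0 ≤ jointTY p κ t y := fun t y =>
        Finset.sum_nonneg (fun x _ => mul_nonneg (hp0 x y) ((hκ x).1 t))
      have h1 : mi (jointTY p κ) ≤ HY := by
        rw [mi, margSnd_jointTY p κ (fun x => (hκ x).2)]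
        have h2 := condEnt_nonneg (jointTY p κ) hTY0
        rw [← hHY]
        linarith
      have hCQgam : CQ ≤ gam ε c := le_trans hB2 (by linarith)
      linarith
  · have hHZpos : 0 < HZ := lt_trans hr hcase
    have hα0 : 0 ≤ r / HZ := div_nonneg hr.le hHZpos.le
    have hα1 : r / HZ ≤ 1 := (div_le_one hHZpos).2 hcase.le
    have hαHZ : r / HZ * HZ = r := div_mul_cancel₀ r (ne_of_gt hHZpos)
    refine ⟨r / HZ, Set.mem_Icc.mpr ⟨hα0, hα1⟩, ?_, ?_⟩
    · rw [hmixt (r / HZ), hαHZ]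
    · rw [ge_iff_le, sub_le_iff_le_add, hmity (r / HZ)]
      apply hSup_le
      intro n κ hκ hIxt
      have hdpi := dpi p κ hp0 hκ
      have hs1 : r / HZ * HZ ≤ r / HZ * (HY + (Real.negMulLog δ1 + δ1 * (Real.log c + 1))) :=
        mul_le_mul_of_nonneg_left (by linarith) hα0
      have hs2 : r / HZ * CQ ≤ CQ := by
        have := mul_le_mul_of_nonneg_right hα1 hCQ0
        linarith [one_mul CQ ▸ this]
      have hs3 : r / HZ * (Real.negMulLog δ1 + δ1 * (Real.log c + 1))
          ≤ Real.negMulLog δ1 + δ1 * (Real.log c + 1) := by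
        have := mul_le_mul_of_nonneg_right hα1 hB10
        linarith [this]
      have e : r / HZ * (HY + (Real.negMulLog δ1 + δ1 * (Real.log c + 1)))
          = r / HZ * (HY - CQ) + r / HZ * CQ
            + r / HZ * (Real.negMulLog δ1 + δ1 * (Real.log c + 1)) := by ring
      linarith [hdpi, hIxt, hαHZ, hbudget, hB2, hs1, hs2, hs3, e]
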